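/- For all natural numbers m, n, w, u, d with w ≤ m, u ≤ m and d ≥ 1, A(m,n,w,d) · V ≤ (Nat.choose m u)^n, where V is the minimum, over all X ∈ J(m,w)^n, of the number of words Y ∈ J(m,u)^n whose Hamming distance from X is at most d−1. -/

import Mathlib

open Finset

/-- Total Hamming distance between two words in `J(m,w)^n`:
the number of positions (among all `m·n` entries) in which they differ. -/
def arrDist {m n : ℕ} (X Y : Fin n → Fin m → ZMod 2) : ℕ :=
  ∑ k, hammingDist (X k) (Y k)

/-- `C` is a constant-weight array code in `J(m,w)^n` with minimum distance `2d`. -/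
def isCWAC (m n w d : ℕ) (C : Finset (Fin n → Fin m → ZMod 2)) : Prop :=
  C.Nonempty ∧ (∀ X ∈ C, ∀ k, hammingNorm (X k) = w) ∧
    ∀ X ∈ C, ∀ Y ∈ C, X ≠ Y → 2 * d ≤ arrDist X Y

/-- Maximum cardinality of a CWAC in `J(m,w)^n` with minimum Hamming distance `2d`. -/
noncomputable def Amax (m n w d : ℕ) : ℕ :=
  sSup { c | ∃ C : Finset (Fin n → Fin m → ZMod 2), isCWAC m n w d C ∧ C.card = c }

/-- Maximum cardinality of an anticode in `J(m,w)^n` with diameter `2δ`. -/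
noncomputable def alphaMax (m n w δ : ℕ) : ℕ :=
  sSup { c | ∃ C : Finset (Fin n → Fin m → ZMod 2), C.Nonempty ∧
    (∀ X ∈ C, ∀ k, hammingNorm (X k) = w) ∧
    (∀ X ∈ C, ∀ Y ∈ C, arrDist X Y ≤ 2 * δ) ∧ C.card = c }

/-- Maximum cardinality of a binary constant-weight code in `J(n,w)` with
minimum Hamming distance `2d`. -/
noncomputable def Bmax (n w d : ℕ) : ℕ :=
  sSup { c | ∃ C : Finset (Fin n → ZMod 2), C.Nonempty ∧
    (∀ x ∈ C, hammingNorm x = w) ∧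
    (∀ x ∈ C, ∀ y ∈ C, x ≠ y → 2 * d ≤ hammingDist x y) ∧ C.card = c }

/-- Maximum cardinality of a nonrestricted `q`-ary code of length `n` with
minimum Hamming distance `d`. -/
noncomputable def Cmax (q n d : ℕ) : ℕ :=
  sSup { c | ∃ C : Finset (Fin n → Fin q), C.Nonempty ∧
    (∀ x ∈ C, ∀ y ∈ C, x ≠ y → d ≤ hammingDist x y) ∧ C.card = c }

/-- `ν(i)`: the number of vectors of weight `u` at Hamming distance `i` from a
fixed vector of weight `w` in `GF(2)^m`. -/
def nuF (m w u : ℕ) (i : ℕ) : ℕ :=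
  if (u + w - i) % 2 = 0 ∧ i ≤ u + w ∧ w ≤ u + i then
    Nat.choose w ((u + w - i) / 2) * Nat.choose (m - w) ((u + i - w) / 2)
  else 0

lemma weightCardLe (m u : ℕ) :
    (univ.filter fun x : Fin m → ZMod 2 => hammingNorm x = u).card ≤ Nat.choose m u := by
  classical
  calc (univ.filter fun x : Fin m → ZMod 2 => hammingNorm x = u).card
      ≤ (Finset.powersetCard u (univ : Finset (Fin m))).card := by
        apply Finset.card_le_card_of_injOn (fun x => univ.filter fun i => x i ≠ 0)
        · intro x hx
          simp only [Finset.mem_coe, mem_filter, mem_univ, true_and] at hx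
          simp [Finset.mem_powersetCard]
          exact hx
        · intro x hx y hy hxy
          funext i
          have h2 : ∀ a : ZMod 2, a = 0 ∨ a = 1 := by decide
          have := Finset.ext_iff.mp hxy i
          simp only [mem_filter, mem_univ, true_and] at this
          rcases h2 (x i) with h | h <;> rcases h2 (y i) with h' | h' <;>
            simp [h, h'] at this ⊢
    _ = Nat.choose m u := by simp


lemma arrDistComm {m n : ℕ} (X Y : Fin n → Fin m → ZMod 2) : arrDist X Y = arrDist Y X := by
  unfold arrDist; simp [hammingDist_comm]

lemma arrDistTriangle {m n : ℕ} (X Y Z : Fin n → Fin m → ZMod 2) :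
    arrDist X Z ≤ arrDist X Y + arrDist Y Z := by
  unfold arrDist
  rw [← Finset.sum_add_distrib]
  exact Finset.sum_le_sum fun k _ => hammingDist_triangle _ _ _

theorem hamming_bound_CWAC (m n w u d : ℕ) (hw : w ≤ m) (hu : u ≤ m) (hd : 1 ≤ d) :
    Amax m n w d *
        sInf { c | ∃ X : Fin n → Fin m → ZMod 2, (∀ k, hammingNorm (X k) = w) ∧
          c = (Finset.univ.filter (fun Y : Fin n → Fin m → ZMod 2 =>
            (∀ k, hammingNorm (Y k) = u) ∧ arrDist X Y ≤ d - 1)).card }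
      ≤ (Nat.choose m u) ^ n := by
  classical
  -- a weight-w vector
  have hx0 : ∃ x : Fin m → ZMod 2, hammingNorm x = w := by
    refine ⟨fun i => if (i : ℕ) < w then 1 else 0, ?_⟩
    have heq : ({i | (fun i : Fin m => if (i:ℕ) < w then (1:ZMod 2) else 0) i ≠ 0} : Finset (Fin m))
        = (univ : Finset (Fin w)).map ⟨Fin.castLE hw, Fin.castLE_injective hw⟩ := by
      ext i
      simp only [Finset.mem_filter, mem_univ, true_and, Finset.mem_map, Function.Embedding.coeFn_mk]
      constructor
      · intro hi
        by_cases h : (i:ℕ) < w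
        · exact ⟨⟨i, h⟩, rfl⟩
        · simp [h] at hi
      · rintro ⟨j, rfl⟩
        simp [j.isLt]
    rw [hammingNorm, heq]; simp
  obtain ⟨x0, hx0⟩ := hx0
  set T := { c | ∃ C : Finset (Fin n → Fin m → ZMod 2), isCWAC m n w d C ∧ C.card = c } with hT
  have hTne : T.Nonempty := by
    refine ⟨1, {fun _ => x0}, ⟨⟨_, Finset.mem_singleton_self _⟩, ?_, ?_⟩, by simp⟩
    · intro X hX k; rw [Finset.mem_singleton] at hX; subst hX; exact hx0
    · intro X hX Y hY hXY
      rw [Finset.mem_singleton] at hX hY; subst hX; subst hY; exact absurd rfl hXY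
  have hTbdd : BddAbove T := by
    refine ⟨Fintype.card (Fin n → Fin m → ZMod 2), ?_⟩
    rintro c ⟨C, _, rfl⟩
    exact Finset.card_le_univ C
  obtain ⟨C, ⟨hCne, hCw, hCd⟩, hCcard⟩ : Amax m n w d ∈ T := Nat.sSup_mem hTne hTbdd
  set V := sInf { c | ∃ X : Fin n → Fin m → ZMod 2, (∀ k, hammingNorm (X k) = w) ∧
          c = (Finset.univ.filter (fun Y : Fin n → Fin m → ZMod 2 =>
            (∀ k, hammingNorm (Y k) = u) ∧ arrDist X Y ≤ d - 1)).card } with hV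
  let ball : (Fin n → Fin m → ZMod 2) → Finset (Fin n → Fin m → ZMod 2) :=
    fun X => Finset.univ.filter (fun Y => (∀ k, hammingNorm (Y k) = u) ∧ arrDist X Y ≤ d - 1)
  have hVle : ∀ X ∈ C, V ≤ (ball X).card := by
    intro X hX
    exact Nat.sInf_le ⟨X, hCw X hX, rfl⟩
  have hdisj : ∀ X ∈ C, ∀ Y ∈ C, X ≠ Y → Disjoint (ball X) (ball Y) := by
    intro X hX Y hY hXY
    rw [Finset.disjoint_left]
    intro Z hZX hZY
    simp only [ball, Finset.mem_filter] at hZX hZY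
    have h1 : arrDist X Y ≤ (d - 1) + (d - 1) :=
      le_trans (arrDistTriangle X Z Y)
        (add_le_add hZX.2.2 (by rw [arrDistComm]; exact hZY.2.2))
    have h2 := hCd X hX Y hY hXY
    have h3 : 2 * d ≤ (d - 1) + (d - 1) := le_trans h2 h1
    have hlt : d - 1 < d := Nat.sub_lt (Nat.lt_of_lt_of_le Nat.zero_lt_one hd) Nat.one_pos
    have h4 : (d - 1) + (d - 1) < 2 * d := by
      rw [two_mul]; exact Nat.add_lt_add hlt hlt
    exact absurd h3 (Nat.not_le.mpr h4)
  -- sum of balls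
  have hsum : Amax m n w d * V ≤ ∑ X ∈ C, (ball X).card := by
    calc Amax m n w d * V = ∑ _X ∈ C, V := by rw [Finset.sum_const, hCcard, smul_eq_mul]
      _ ≤ ∑ X ∈ C, (ball X).card := Finset.sum_le_sum hVle
  have hunion : ∑ X ∈ C, (ball X).card = (C.biUnion ball).card :=
    (Finset.card_biUnion hdisj).symm
  have hsub : C.biUnion ball ⊆ Finset.univ.filter
      (fun Y : Fin n → Fin m → ZMod 2 => ∀ k, hammingNorm (Y k) = u) := by
    intro Z hZ
    rw [Finset.mem_biUnion] at hZ
    obtain ⟨X, _, hZX⟩ := hZ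
    simp only [ball, Finset.mem_filter] at hZX ⊢
    exact ⟨Finset.mem_univ _, hZX.2.1⟩
  have hcount : (Finset.univ.filter
      (fun Y : Fin n → Fin m → ZMod 2 => ∀ k, hammingNorm (Y k) = u)).card
      ≤ (Nat.choose m u)^n := by
    have heq : (univ.filter fun Y : Fin n → Fin m → ZMod 2 => ∀ k, hammingNorm (Y k) = u)
        = Fintype.piFinset (fun _ : Fin n => univ.filter fun x : Fin m → ZMod 2 => hammingNorm x = u) := by
      ext Y; simp [Fintype.mem_piFinset]
    rw [heq, Fintype.card_piFinset]
    calc ∏ _k : Fin n, (univ.filter fun x : Fin m → ZMod 2 => hammingNorm x = u).card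
        ≤ ∏ _k : Fin n, Nat.choose m u := Finset.prod_le_prod' (fun _ _ => weightCardLe m u)
      _ = (Nat.choose m u)^n := by simp
  calc Amax m n w d * V ≤ ∑ X ∈ C, (ball X).card := hsum
    _ = (C.biUnion ball).card := hunion
    _ ≤ _ := Finset.card_le_card hsub
    _ ≤ (Nat.choose m u)^n := hcount
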